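/- Let v_1,…,v_n be independent, integrable, nonnegative real random variables and set the posted price p = (1/2)·E[max_i v_i]. In the single-item posted-price sale in a fixed order 1,…,n, the item is sold to the first buyer i with v_i > p (if any), and the realized welfare W equals the value of the purchasing buyer (W = 0 if no buyer purchases). Then E[W] ≥ (1/2)·E[max_i v_i]. -/

import Mathlib

open MeasureTheory Finset

/-- single-item prophet inequality via a posted price.
For independent, integrable, nonnegative values `v_1,…,v_n` and posted price
`p = (1/2)·E[max_i v_i]`, selling the item to the first buyer (in the fixed
order `0,1,…,n-1`) whose value strictly exceeds `p` yields expected welfare at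
least `(1/2)·E[max_i v_i]`. -/
theorem single_item_posted_price_half
    {Ω : Type*} [MeasurableSpace Ω] (μ : Measure Ω) [IsProbabilityMeasure μ]
    {n : ℕ} [NeZero n]
    (X : Fin n → Ω → ℝ)
    (hmeas : ∀ i, Measurable (X i))
    (hindep : ProbabilityTheory.iIndepFun X μ)
    (hint : ∀ i, Integrable (X i) μ)
    (hnonneg : ∀ i ω, 0 ≤ X i ω)
    (p : ℝ)
    (hp : p = (1 / 2) *
      ∫ ω, (Finset.univ.sup' Finset.univ_nonempty fun i => X i ω) ∂μ)
    (W : Ω → ℝ)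
    (hW : ∀ ω,
      W ω = if h : (Finset.univ.filter fun i => p < X i ω).Nonempty
        then X ((Finset.univ.filter fun i => p < X i ω).min' h) ω
        else 0) :
    (1 / 2) * (∫ ω, (Finset.univ.sup' Finset.univ_nonempty fun i => X i ω) ∂μ) ≤
      ∫ ω, W ω ∂μ := by
  classical
  set M := ∫ ω, (Finset.univ.sup' Finset.univ_nonempty fun i => X i ω) ∂μ with hM
  set C : Fin n → Set Ω := fun i => {ω | ∀ j, j < i → X j ω ≤ p} with hC
  set A : Set Ω := {ω | ∃ i, p < X i ω} with hA
  have hCmeas : ∀ i, MeasurableSet (C i) := by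
    intro i
    have h1 : C i = ⋂ j ∈ {j : Fin n | j < i}, {ω | X j ω ≤ p} := by
      ext ω; simp [hC]
    rw [h1]
    exact MeasurableSet.biInter (Set.to_countable _)
      fun j _ => measurableSet_le (hmeas j) measurable_const
  have hAmeas : MeasurableSet A := by
    have h1 : A = ⋃ i, {ω | p < X i ω} := by ext ω; simp [hA]
    rw [h1]
    exact MeasurableSet.iUnion fun i => measurableSet_lt measurable_const (hmeas i)
  set g : Fin n → Ω → ℝ :=
    fun i ω => max (X i ω - p) 0 * (C i).indicator (fun _ => (1:ℝ)) ω with hg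
  -- pointwise identity
  have hid : ∀ ω, W ω = p * A.indicator (fun _ => (1:ℝ)) ω + ∑ i, g i ω := by
    intro ω
    by_cases h : (Finset.univ.filter fun i => p < X i ω).Nonempty
    · set i0 := (Finset.univ.filter fun i => p < X i ω).min' h with hi0
      have hi0mem := Finset.min'_mem _ h
      have hpi0 : p < X i0 ω := (Finset.mem_filter.mp hi0mem).2
      have hAω : ω ∈ A := ⟨i0, hpi0⟩
      have hmin : ∀ j, p < X j ω → i0 ≤ j := fun j hj =>
        Finset.min'_le _ j (Finset.mem_filter.mpr ⟨Finset.mem_univ _, hj⟩)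
      have hsum : ∑ i, g i ω = X i0 ω - p := by
        rw [Finset.sum_eq_single i0]
        · have hCi0 : ω ∈ C i0 := fun j hj =>
            le_of_not_gt fun hc => absurd (hmin j hc) (not_le.mpr hj)
          simp [hg, Set.indicator_of_mem hCi0, max_eq_left (le_of_lt (sub_pos.mpr hpi0))]
        · intro i _ hne
          rcases lt_or_gt_of_ne hne with hlt | hgt
          · have hle : X i ω ≤ p :=
              le_of_not_gt fun hc => absurd (hmin i hc) (not_le.mpr hlt)
            simp [hg, max_eq_right (sub_nonpos.mpr hle)]
          · have hnC : ω ∉ C i := fun hc => absurd (hc i0 hgt) (not_le.mpr hpi0)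
            simp [hg, Set.indicator_of_notMem hnC]
        · intro h'; exact absurd (Finset.mem_univ i0) h'
      rw [hW ω, dif_pos h, hsum, Set.indicator_of_mem hAω]
      ring
    · have hall : ∀ i, X i ω ≤ p := by
        intro i
        by_contra hc
        push_neg at hc
        exact h ⟨i, Finset.mem_filter.mpr ⟨Finset.mem_univ i, hc⟩⟩
      have hAω : ω ∉ A := by
        rintro ⟨i, hi⟩; exact absurd hi (not_lt.mpr (hall i))
      have hz : ∀ i ∈ Finset.univ, g i ω = 0 := fun i _ => by
        simp [hg, max_eq_right (sub_nonpos.mpr (hall i))]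
      rw [hW ω, dif_neg h, Set.indicator_of_notMem hAω, Finset.sum_eq_zero hz]
      ring
  -- integrability pieces
  have hposint : ∀ i, Integrable (fun ω => max (X i ω - p) 0) μ :=
    fun i => ((hint i).sub (integrable_const p)).pos_part
  have hindicint : ∀ i, Integrable ((C i).indicator (fun _ => (1:ℝ))) μ :=
    fun i => (integrable_const (1:ℝ)).indicator (hCmeas i)
  have hgint : ∀ i, Integrable (g i) μ := by
    intro i
    have hbd : ∀ ω, ‖(C i).indicator (fun _ => (1:ℝ)) ω‖ ≤ 1 := by
      intro ω
      by_cases hω : ω ∈ C i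
      · rw [Set.indicator_of_mem hω]; simp
      · rw [Set.indicator_of_notMem hω]; simp
    have h1 := (hposint i).bdd_mul
      ((measurable_const.indicator (hCmeas i)).aestronglyMeasurable)
      (Filter.Eventually.of_forall hbd)
    exact h1.congr (Filter.Eventually.of_forall fun ω => (mul_comm _ _))
  -- independence
  have hindepCi : ∀ i, ProbabilityTheory.IndepFun (fun ω => max (X i ω - p) 0)
      ((C i).indicator (fun _ => (1:ℝ))) μ := by
    intro i
    set S : Finset (Fin n) := Finset.univ.filter (· < i) with hS
    have hdisj : Disjoint ({i} : Finset (Fin n)) S := by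
      simp [hS, Finset.disjoint_left]
    have h1 := hindep.indepFun_finset {i} S hdisj hmeas
    have hiself : i ∈ ({i} : Finset (Fin n)) := Finset.mem_singleton_self i
    set φ : (({i} : Finset (Fin n)) → ℝ) → ℝ := fun v => max (v ⟨i, hiself⟩ - p) 0 with hφ
    set T : Set (∀ _ : {x : Fin n // x ∈ S}, ℝ) := {v | ∀ j, v j ≤ p} with hT
    have hTmeas : MeasurableSet T := by
      have h2 : T = ⋂ j : {x : Fin n // x ∈ S}, {v : ∀ _ : {x : Fin n // x ∈ S}, ℝ | v j ≤ p} := by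
        ext v; simp [hT]
      rw [h2]
      exact MeasurableSet.iInter fun j =>
        measurableSet_le (measurable_pi_apply j) measurable_const
    have hφm : Measurable φ :=
      ((measurable_pi_apply _).sub measurable_const).max measurable_const
    have hψm : Measurable (T.indicator (fun _ => (1:ℝ))) :=
      measurable_const.indicator hTmeas
    have h3 := h1.comp hφm hψm
    have hl : (fun ω => max (X i ω - p) 0)
        = φ ∘ (fun ω (j : ({i} : Finset (Fin n))) => X j ω) := rfl
    have hr : (C i).indicator (fun _ => (1:ℝ)) =
        (T.indicator (fun _ => (1:ℝ))) ∘ (fun ω (j : {x : Fin n // x ∈ S}) => X j ω) := by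
      funext ω
      have hiff : ((fun j : {x : Fin n // x ∈ S} => X j ω) ∈ T) ↔ ω ∈ C i := by
        constructor
        · intro hv j hj
          exact hv ⟨j, by simp [hS, hj]⟩
        · intro hω j
          exact hω j (Finset.mem_filter.mp j.2).2
      by_cases hω : ω ∈ C i
      · simp [Function.comp, Set.indicator_of_mem hω, Set.indicator_of_mem (hiff.mpr hω)]
      · simp [Function.comp, Set.indicator_of_notMem hω,
          Set.indicator_of_notMem (fun hc => hω (hiff.mp hc))]
    rw [hl, hr]
    exact h3
  have hmul : ∀ i, ∫ ω, g i ω ∂μ =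
      (∫ ω, max (X i ω - p) 0 ∂μ) * (μ (C i)).toReal := by
    intro i
    have h1 := (hindepCi i).integral_mul_eq_mul_integral (hposint i).aestronglyMeasurable
      (hindicint i).aestronglyMeasurable
    have h4 : ∫ ω, g i ω ∂μ =
        (∫ ω, max (X i ω - p) 0 ∂μ) * ∫ ω, (C i).indicator (fun _ => (1:ℝ)) ω ∂μ := h1
    rw [h4, integral_indicator_const (1:ℝ) (hCmeas i)]
    simp [Measure.real]
  -- expected welfare formula
  have hAint : Integrable (fun ω => p * A.indicator (fun _ => (1:ℝ)) ω) μ :=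
    ((integrable_const (1:ℝ)).indicator hAmeas).const_mul p
  have hEW : ∫ ω, W ω ∂μ =
      p * (μ A).toReal + ∑ i, (∫ ω, max (X i ω - p) 0 ∂μ) * (μ (C i)).toReal := by
    rw [integral_congr_ae (Filter.Eventually.of_forall hid),
      integral_add hAint (integrable_finset_sum _ fun i _ => hgint i),
      integral_finset_sum _ fun i _ => hgint i, integral_const_mul,
      integral_indicator_const (1:ℝ) hAmeas]
    simp only [smul_eq_mul, mul_one]
    exact congrArg _ (Finset.sum_congr rfl fun i _ => hmul i)
  -- sup' integrable
  have hsupmeas : Measurable (fun ω => Finset.univ.sup' Finset.univ_nonempty fun i => X i ω) := by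
    have h1 := Finset.measurable_sup' (s := Finset.univ) (f := X)
      Finset.univ_nonempty (fun i _ => hmeas i)
    have h2 : (fun ω => Finset.univ.sup' Finset.univ_nonempty fun i => X i ω)
        = Finset.univ.sup' Finset.univ_nonempty X := by
      funext ω; rw [Finset.sup'_apply]
    rw [h2]; exact h1
  have hsupint : Integrable (fun ω => Finset.univ.sup' Finset.univ_nonempty fun i => X i ω) μ := by
    refine Integrable.mono' (integrable_finset_sum Finset.univ fun i _ => hint i)
      hsupmeas.aestronglyMeasurable (Filter.Eventually.of_forall fun ω => ?_)
    obtain ⟨i1, _, h1⟩ := Finset.exists_mem_eq_sup' Finset.univ_nonempty (fun i => X i ω)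
    have hnn : 0 ≤ Finset.univ.sup' Finset.univ_nonempty fun i => X i ω :=
      le_trans (hnonneg i1 ω) (Finset.le_sup' (fun i => X i ω) (Finset.mem_univ i1))
    rw [Real.norm_eq_abs, abs_of_nonneg hnn, h1]
    exact Finset.single_le_sum (fun j _ => hnonneg j ω) (Finset.mem_univ i1)
  have hspos : ∀ ω, (Finset.univ.sup' Finset.univ_nonempty fun i => X i ω) - p
      ≤ ∑ i, max (X i ω - p) 0 := by
    intro ω
    obtain ⟨i1, _, h1⟩ := Finset.exists_mem_eq_sup' Finset.univ_nonempty (fun i => X i ω)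
    rw [h1]
    calc X i1 ω - p ≤ max (X i1 ω - p) 0 := le_max_left _ _
      _ ≤ ∑ i, max (X i ω - p) 0 :=
        Finset.single_le_sum (f := fun i => max (X i ω - p) 0)
          (fun j _ => le_max_right _ 0) (Finset.mem_univ i1)
  have hsum_ge : M - p ≤ ∑ i, ∫ ω, max (X i ω - p) 0 ∂μ := by
    have h1 : M - p = ∫ ω, ((Finset.univ.sup' Finset.univ_nonempty fun i => X i ω) - p) ∂μ := by
      rw [integral_sub hsupint (integrable_const p), integral_const]
      simp [hM]
    rw [h1, ← integral_finset_sum _ fun i _ => hposint i]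
    exact integral_mono (hsupint.sub (integrable_const p))
      (integrable_finset_sum _ fun i _ => hposint i) hspos
  set q := (μ Aᶜ).toReal with hq
  have haq : (μ A).toReal + q = 1 := by
    rw [hq, ← ENNReal.toReal_add (measure_ne_top _ _) (measure_ne_top _ _),
      measure_add_measure_compl hAmeas]
    simp
  have hq0 : (0:ℝ) ≤ q := ENNReal.toReal_nonneg
  have hCq : ∀ i, q ≤ (μ (C i)).toReal := by
    intro i
    refine ENNReal.toReal_mono (measure_ne_top _ _) (measure_mono ?_)
    intro ω hω j _
    exact le_of_not_gt fun hc => hω ⟨j, hc⟩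
  have hEnn : ∀ i, 0 ≤ ∫ ω, max (X i ω - p) 0 ∂μ :=
    fun i => integral_nonneg fun ω => le_max_right _ _
  have hpM : M - p = p := by rw [hp]; ring
  have hple : p ≤ ∑ i, ∫ ω, max (X i ω - p) 0 ∂μ := by linarith [hsum_ge, hpM]
  calc (1/2) * M = p := hp.symm
    _ = p * ((μ A).toReal + q) := by rw [haq, mul_one]
    _ = p * (μ A).toReal + q * p := by ring
    _ ≤ p * (μ A).toReal + q * ∑ i, ∫ ω, max (X i ω - p) 0 ∂μ :=
        add_le_add_right (mul_le_mul_of_nonneg_left hple hq0) _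
    _ = p * (μ A).toReal + ∑ i, q * ∫ ω, max (X i ω - p) 0 ∂μ := by rw [Finset.mul_sum]
    _ ≤ p * (μ A).toReal + ∑ i, (∫ ω, max (X i ω - p) 0 ∂μ) * (μ (C i)).toReal := by
        refine add_le_add_right (Finset.sum_le_sum fun i _ => ?_) _
        rw [mul_comm]
        exact mul_le_mul_of_nonneg_left (hCq i) (hEnn i)
    _ = ∫ ω, W ω ∂μ := hEW.symm
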